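/- Let σ be a subdistribution on X and g a subdistribution kernel from X to Y, and let g†σ be the Bayesian inversion of g with respect to σ. Then: (i) g†σ is a subdistribution kernel from Y to X and is quasi-total, with ∑' x, g†σ y x = 1 whenever ∑' x', σ x' * g x' y ≠ 0 and ∑' x, g†σ y x = 0 otherwise; and (ii) (synthetic Bayes' theorem in the Kleisli category of the subdistribution monad) for every x : X and y : Y, σ x * g x y = (∑' x', σ x' * g x' y) * g†σ y x; in particular, for a deterministic observation y₀ : Y, the subdistribution x ↦ σ x * g x y₀ obtained by sampling x from σ, sampling y from g x, and conditioning on y = y₀ equals the scalar ∑' x', σ x' * g x' y₀ times the Bayesian inversion g†σ y₀. -/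

import Mathlib

open scoped ENNReal

/-- The Bayesian inversion of a subdistribution kernel `g : X → Y` with
respect to a subdistribution `σ` on `X`. -/
noncomputable def bayesInv {X Y : Type*} (σ : X → ℝ≥0∞) (g : X → Y → ℝ≥0∞)
    (y : Y) (x : X) : ℝ≥0∞ :=
  (σ x * g x y) / ∑' x', σ x' * g x' y

/-- Synthetic Bayes' theorem in the Kleisli category of the subdistribution
monad: the Bayesian inversion is a quasi-total subdistribution kernel, and
conditioning on a deterministic observation `y` equals, up to the scalar
`∑' x', σ x' * g x' y`, evaluating the Bayesian inversion at `y`. -/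
theorem subdist_bayes
    {X Y : Type*} (σ : X → ℝ≥0∞) (hσ : ∑' x, σ x ≤ 1)
    (g : X → Y → ℝ≥0∞) (hg : ∀ x, ∑' y, g x y ≤ 1) :
    (∀ y, ∑' x, bayesInv σ g y x ≤ 1) ∧
    (∀ y, (∑' x', σ x' * g x' y) ≠ 0 → ∑' x, bayesInv σ g y x = 1) ∧
    (∀ y, (∑' x', σ x' * g x' y) = 0 → ∑' x, bayesInv σ g y x = 0) ∧
    (∀ x y, σ x * g x y = (∑' x', σ x' * g x' y) * bayesInv σ g y x) := by
  have hD : ∀ y, (∑' x', σ x' * g x' y) ≤ 1 := by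
    intro y
    calc (∑' x', σ x' * g x' y) ≤ ∑' x', σ x' := by
          refine ENNReal.tsum_le_tsum fun x => ?_
          calc σ x * g x y ≤ σ x * 1 := by
                exact mul_le_mul_right (le_trans (ENNReal.le_tsum y) (hg x)) _
            _ = σ x := mul_one _
      _ ≤ 1 := hσ
  have hDne : ∀ y, (∑' x', σ x' * g x' y) ≠ ⊤ := fun y =>
    ne_top_of_le_ne_top ENNReal.one_ne_top (hD y)
  have hsum : ∀ y, ∑' x, bayesInv σ g y x
      = (∑' x', σ x' * g x' y) / (∑' x', σ x' * g x' y) := by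
    intro y
    unfold bayesInv
    simp only [div_eq_mul_inv]
    rw [ENNReal.tsum_mul_right]
  refine ⟨?_, ?_, ?_, ?_⟩
  · intro y
    rw [hsum y]
    exact ENNReal.div_self_le_one
  · intro y h0
    rw [hsum y, ENNReal.div_self h0 (hDne y)]
  · intro y h0
    rw [hsum y, h0, ENNReal.zero_div]
  · intro x y
    by_cases h0 : (∑' x', σ x' * g x' y) = 0
    · have : σ x * g x y = 0 := by
        have := ENNReal.le_tsum (f := fun x' => σ x' * g x' y) x
        rw [h0] at this
        exact le_antisymm this zero_le
      simp [this, bayesInv, h0]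
    · unfold bayesInv
      rw [ENNReal.mul_div_cancel h0 (hDne y)]
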